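/- In the lamplighter group L_k = (ℤ/kℤ) ≀ ℤ with presentation ⟨b, c | cᵏ, [c, bⁿcb⁻ⁿ] for n ∈ ℕ⟩, the set X_k = {c^i b : 0 ≤ i ≤ k−1} generates L_k, and every relator in the presentation ⟨X_k | (c̄₁b⁻¹)ᵏ, (c̄₁b⁻¹)ⁱb c̄ᵢ⁻¹, [c̄₁b⁻¹, bⁿc̄₁b⁻ⁿ⁻¹]⟩ (where c̄ᵢ = cⁱb) has total exponent 0 with respect to X_k. -/

import Mathlib

open scoped commutatorElement
/-- Relators of the standard presentation `⟨b, c | cᵏ, [c, bⁿcb⁻ⁿ]⟩` of the lamplighter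
group `ℤ/kℤ ≀ ℤ`, over the alphabet `Bool` with `b = of true` and `c = of false`. -/
def llRels (k : ℕ) : Set (FreeGroup Bool) :=
  {(FreeGroup.of false) ^ k} ∪
    ⋃ n : ℕ, {⁅FreeGroup.of false,
      (FreeGroup.of true) ^ n * FreeGroup.of false * ((FreeGroup.of true)⁻¹) ^ n⁆}

/-- The lamplighter group `L_k = ℤ/kℤ ≀ ℤ`, via its standard presentation. -/
abbrev Lamplighter (k : ℕ) := PresentedGroup (llRels k)

/-- The generator `b` (the shift). -/
def llb (k : ℕ) : Lamplighter k := PresentedGroup.of true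

/-- The generator `c` (the lamp at position 0). -/
def llc (k : ℕ) : Lamplighter k := PresentedGroup.of false

/-- The total-exponent homomorphism on words over the alphabet `ZMod k`
(standing for the generating set `X_k = {c̄ᵢ = cⁱb}`), sending every generator to `1 ∈ ℤ`. -/
def expX (k : ℕ) : FreeGroup (ZMod k) →* Multiplicative ℤ :=
  FreeGroup.lift fun _ => Multiplicative.ofAdd 1

/-- The word `c̄₁ b⁻¹` over the alphabet `ZMod k` (with the letter `i` standing for
`c̄ᵢ = cⁱb`, so `b = c̄₀`). -/
def wC (k : ℕ) : FreeGroup (ZMod k) := FreeGroup.of 1 * (FreeGroup.of 0)⁻¹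

/-- In the lamplighter group `L_k = ℤ/kℤ ≀ ℤ` presented as
`⟨b, c | cᵏ, [c, bⁿcb⁻ⁿ]⟩`, the set `X_k = {cⁱb : 0 ≤ i ≤ k−1}` generates `L_k`, and
every relator of the presentation over `X_k` — namely `(c̄₁b⁻¹)ᵏ`, `(c̄₁b⁻¹)ⁱ b c̄ᵢ⁻¹`
for `2 ≤ i ≤ k−1`, and `[c̄₁b⁻¹, bⁿ c̄₁ b⁻ⁿ⁻¹]` — has total exponent `0` with respect
to `X_k`. -/
theorem lamplighter_generators_and_exponents (k : ℕ) (hk : 2 ≤ k) :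
    (Subgroup.closure (Set.range fun i : Fin k => (llc k) ^ (i : ℕ) * llb k) = ⊤) ∧
    (expX k ((wC k) ^ k) = 1) ∧
    (∀ i : ℕ, 2 ≤ i → i ≤ k - 1 →
      expX k ((wC k) ^ i * FreeGroup.of 0 * (FreeGroup.of (i : ZMod k))⁻¹) = 1) ∧
    (∀ n : ℕ,
      expX k ⁅wC k, (FreeGroup.of (0 : ZMod k)) ^ n * FreeGroup.of (1 : ZMod k) *
        ((FreeGroup.of (0 : ZMod k))⁻¹) ^ (n + 1)⁆ = 1) := by
  have hw : expX k (wC k) = 1 := by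
    simp [expX, wC]
  refine ⟨?_, ?_, ?_, ?_⟩
  · rw [eq_top_iff, ← PresentedGroup.closure_range_of, Subgroup.closure_le]
    have hb : llb k ∈ Subgroup.closure
        (Set.range fun i : Fin k => (llc k) ^ (i : ℕ) * llb k) := by
      have : (llc k) ^ ((⟨0, by omega⟩ : Fin k) : ℕ) * llb k = llb k := by simp
      exact this ▸ Subgroup.subset_closure ⟨⟨0, by omega⟩, this⟩
    have hc : llc k ∈ Subgroup.closure
        (Set.range fun i : Fin k => (llc k) ^ (i : ℕ) * llb k) := by
      have h1 : (llc k) ^ ((⟨1, by omega⟩ : Fin k) : ℕ) * llb k ∈ Subgroup.closure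
          (Set.range fun i : Fin k => (llc k) ^ (i : ℕ) * llb k) :=
        Subgroup.subset_closure ⟨⟨1, by omega⟩, rfl⟩
      simpa using mul_mem h1 (inv_mem hb)
    rintro _ ⟨x, rfl⟩
    cases x
    · exact hc
    · exact hb
  · simp [map_pow, hw]
  · intro i _ _
    rw [map_mul, map_mul, map_pow, hw]
    simp [expX]
  · intro n
    simp only [commutatorElement_def, map_mul, map_inv, map_pow, expX, FreeGroup.lift_apply_of]
    group
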